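/- Let D > 0 be a real number and define the adjacency relation Adj on Euclidean 3-space by Adj p q ↔ dist p q = D. Then for any two distinct points p and q of Euclidean 3-space, p and q are related by the transitive closure of Adj; that is, there exist n ≥ 1 and a finite chain p = p₀, p₁, …, pₙ = q of points with dist pᵢ pᵢ₊₁ = D for every i < n. -/

import Mathlib

open Submodule Module RealInnerProductSpace

lemma exists_orth (v : EuclideanSpace ℝ (Fin 3)) :
    ∃ u : EuclideanSpace ℝ (Fin 3), ‖u‖ = 1 ∧ ⟪u, v⟫ = 0 := by
  have hdim : finrank ℝ (ℝ ∙ v) + finrank ℝ (ℝ ∙ v)ᗮ = finrank ℝ (EuclideanSpace ℝ (Fin 3)) :=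
    Submodule.finrank_add_finrank_orthogonal _
  have h3 : finrank ℝ (EuclideanSpace ℝ (Fin 3)) = 3 := by simp
  have hle : finrank ℝ (ℝ ∙ v) ≤ 1 := by
    rcases eq_or_ne v 0 with h | h
    · rw [h, Submodule.span_zero_singleton]; simp
    · rw [finrank_span_singleton h]
  have hpos : 0 < finrank ℝ (ℝ ∙ v)ᗮ := by omega
  have hne : (ℝ ∙ v)ᗮ ≠ ⊥ := by
    intro h
    rw [h, finrank_bot] at hpos
    exact lt_irrefl 0 hpos
  obtain ⟨w, hw, hw0⟩ := Submodule.exists_mem_ne_zero_of_ne_bot hne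
  have hinner : ⟪v, w⟫ = 0 := Submodule.mem_orthogonal_singleton_iff_inner_right.mp hw
  refine ⟨‖w‖⁻¹ • w, ?_, ?_⟩
  · simp [norm_smul, norm_ne_zero_iff.mpr hw0, inv_mul_cancel₀]
  · rw [real_inner_smul_left, real_inner_comm, hinner, mul_zero]

lemma hop (D : ℝ) (hD : 0 < D) (a b : EuclideanSpace ℝ (Fin 3)) (h : dist a b ≤ 2*D) :
    ∃ r, dist a r = D ∧ dist r b = D := by
  obtain ⟨u, hu1, hu0⟩ := exists_orth (b - a)
  set d := dist a b with hd
  have hd0 : 0 ≤ d := dist_nonneg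
  have hsq : 0 ≤ D^2 - (d/2)^2 := by nlinarith
  set t := Real.sqrt (D^2 - (d/2)^2) with ht
  have ht2 : t^2 = D^2 - (d/2)^2 := Real.sq_sqrt hsq
  have hnv : ‖b - a‖ = d := by rw [hd, dist_comm, dist_eq_norm]
  have hnorm : ∀ s : ℝ, s^2 = t^2 → ‖(1/2:ℝ) • (b - a) + s • u‖ = D := by
    intro s hs
    have horth : ⟪(1/2:ℝ) • (b - a), s • u⟫ = 0 := by
      rw [real_inner_smul_left, real_inner_smul_right, real_inner_comm, hu0]; ring
    have key := norm_add_sq_eq_norm_sq_add_norm_sq_real horth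
    rw [norm_smul, norm_smul, hnv, hu1] at key
    simp only [Real.norm_eq_abs] at key
    rw [abs_of_nonneg (by norm_num : (0:ℝ) ≤ 1/2)] at key
    have habs : |s| * |s| = s^2 := by rw [← sq_abs s]; ring
    nlinarith [norm_nonneg ((1/2:ℝ) • (b - a) + s • u), key, ht2, habs, hs, hD, sq_nonneg (‖(1/2:ℝ) • (b - a) + s • u‖ - D), sq_nonneg (‖(1/2:ℝ) • (b - a) + s • u‖ + D)]
  refine ⟨a + ((1/2:ℝ) • (b - a) + t • u), ?_, ?_⟩
  · rw [dist_eq_norm, ← norm_neg]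
    have : -(a - (a + ((1/2:ℝ) • (b - a) + t • u))) = (1/2:ℝ) • (b - a) + t • u := by abel
    rw [this]
    exact hnorm t rfl
  · rw [dist_eq_norm, ← norm_neg]
    have : -((a + ((1/2:ℝ) • (b - a) + t • u)) - b) = (1/2:ℝ) • (b - a) + (-t) • u := by
      module
    rw [this]
    exact hnorm (-t) (by ring)
lemma chain_append {X : Type*} [MetricSpace X] (D : ℝ) {a c b : X} {m k : ℕ} {f g : ℕ → X}
    (hf0 : f 0 = a) (hfm : f m = c) (hf : ∀ i < m, dist (f i) (f (i+1)) = D)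
    (hg0 : g 0 = c) (hgk : g k = b) (hg : ∀ i < k, dist (g i) (g (i+1)) = D) :
    ∃ h : ℕ → X, h 0 = a ∧ h (m+k) = b ∧ ∀ i < m+k, dist (h i) (h (i+1)) = D := by
  refine ⟨fun i => if i ≤ m then f i else g (i - m), by simpa, ?_, ?_⟩
  · rcases Nat.eq_zero_or_pos k with hk | hk
    · subst hk; simpa using hfm.trans (hg0.symm.trans hgk)
    · have : ¬ (m + k ≤ m) := by omega
      simpa [this] using hgk
  · intro i hi
    rcases lt_or_ge i m with him | him
    · have h1 : i ≤ m := him.le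
      have h2 : i + 1 ≤ m := him
      simp only [h1, h2, if_pos]
      exact hf i him
    · have h2 : ¬ (i + 1 ≤ m) := by omega
      have e2 : i + 1 - m = (i - m) + 1 := by omega
      have e1 : (if i ≤ m then f i else g (i - m)) = g (i - m) := by
        rcases Nat.eq_or_lt_of_le him with he | hl
        · have : i ≤ m := he.ge
          simp [this, ← he, hfm, hg0, Nat.sub_self]
        · have : ¬ (i ≤ m) := by omega
          simp [this]
      simp only [h2, if_neg, not_false_iff, e2, e1]
      exact hg (i - m) (by omega)

lemma chain_exists (D : ℝ) (hD : 0 < D) :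
    ∀ N : ℕ, ∀ a b : EuclideanSpace ℝ (Fin 3), dist a b ≤ 2*D*(N+1) →
      ∃ f : ℕ → EuclideanSpace ℝ (Fin 3),
        f 0 = a ∧ f (2*(N+1)) = b ∧ ∀ i < 2*(N+1), dist (f i) (f (i+1)) = D := by
  intro N
  induction N with
  | zero =>
    intro a b hab
    obtain ⟨r, h1, h2⟩ := hop D hD a b (by push_cast at hab; linarith)
    refine ⟨fun i => if i = 0 then a else if i = 1 then r else b, by simp, by simp, ?_⟩
    intro i hi
    interval_cases i <;> simpa
  | succ N ih =>
    intro a b hab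
    rcases le_or_gt (dist a b) (2*D) with hle | hgt
    · obtain ⟨f, hf0, hfm, hf⟩ := ih a a (by simp; positivity)
      obtain ⟨r, h1, h2⟩ := hop D hD a b hle
      set g : ℕ → EuclideanSpace ℝ (Fin 3) :=
        fun i => if i = 0 then a else if i = 1 then r else b with hgdef
      have hg0 : g 0 = a := by simp [hgdef]
      have hgk : g 2 = b := by norm_num [hgdef]
      have hg : ∀ i < 2, dist (g i) (g (i+1)) = D := by
        intro i hi; interval_cases i <;> simpa [hgdef]
      obtain ⟨h, hh0, hhm, hh⟩ := chain_append D hf0 hfm hf hg0 hgk hg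
      exact ⟨h, hh0, by simpa [show 2*(N+1)+2 = 2*(N+1+1) by ring] using hhm, by
        intro i hi
        exact hh i (by omega)⟩
    · set d := dist a b with hd
      have hd0 : 0 < d := by linarith
      set s : ℝ := (d - 2*D)/d with hs
      have hs0 : 0 ≤ s := by
        apply div_nonneg (by linarith) hd0.le
      have hs1 : s ≤ 1 := by
        rw [div_le_one hd0]; linarith
      set c := a + s • (b - a) with hc
      have hnv : ‖b - a‖ = d := by rw [hd, dist_comm, dist_eq_norm]
      have hac : dist a c = d - 2*D := by
        rw [dist_eq_norm, hc]
        have : a - (a + s • (b - a)) = -(s • (b - a)) := by abel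
        rw [this, norm_neg, norm_smul, Real.norm_eq_abs, abs_of_nonneg hs0, hnv, hs]
        field_simp
      have hcb : dist c b = 2*D := by
        rw [dist_eq_norm, hc]
        have : (a + s • (b - a)) - b = -((1 - s) • (b - a)) := by module
        rw [this, norm_neg, norm_smul, Real.norm_eq_abs, abs_of_nonneg (by linarith), hnv, hs]
        field_simp
        ring
      obtain ⟨f, hf0, hfm, hf⟩ := ih a c (by
        rw [hac]; have h' := hab; push_cast at h' ⊢; linarith)
      obtain ⟨r, h1, h2⟩ := hop D hD c b (by rw [hcb])
      set g : ℕ → EuclideanSpace ℝ (Fin 3) :=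
        fun i => if i = 0 then c else if i = 1 then r else b with hgdef
      have hg0 : g 0 = c := by simp [hgdef]
      have hgk : g 2 = b := by norm_num [hgdef]
      have hg : ∀ i < 2, dist (g i) (g (i+1)) = D := by
        intro i hi; interval_cases i <;> simpa [hgdef]
      obtain ⟨h, hh0, hhm, hh⟩ := chain_append D hf0 hfm hf hg0 hgk hg
      exact ⟨h, hh0, by simpa [show 2*(N+1)+2 = 2*(N+1+1) by ring] using hhm, by
        intro i hi
        exact hh i (by omega)⟩
lemma chain_transGen (D : ℝ) (f : ℕ → EuclideanSpace ℝ (Fin 3)) :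
    ∀ n : ℕ, 1 ≤ n → (∀ i < n, dist (f i) (f (i+1)) = D) →
      Relation.TransGen (fun a b : EuclideanSpace ℝ (Fin 3) => dist a b = D) (f 0) (f n) := by
  intro n
  induction n with
  | zero => omega
  | succ n ih =>
    intro _ hadj
    rcases Nat.eq_zero_or_pos n with hn | hn
    · subst hn
      exact Relation.TransGen.single (hadj 0 (by omega))
    · exact (ih hn (fun i hi => hadj i (by omega))).tail (hadj n (by omega))

/-- For any D > 0, any two distinct points of Euclidean 3-space are related by
the transitive closure of the adjacency relation `dist · · = D` (axiom 8's
`ConnP`); that is, they are joined by a finite chain of length n ≥ 1 of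
consecutively adjacent points. The global spatial region is fully connected. -/
theorem global_region_fully_connected
    (D : ℝ) (hD : 0 < D)
    (p q : EuclideanSpace ℝ (Fin 3)) (hpq : p ≠ q) :
    Relation.TransGen (fun a b : EuclideanSpace ℝ (Fin 3) => dist a b = D) p q ∧
      ∃ n : ℕ, 1 ≤ n ∧ ∃ f : ℕ → EuclideanSpace ℝ (Fin 3),
        f 0 = p ∧ f n = q ∧ ∀ i < n, dist (f i) (f (i + 1)) = D := by
  obtain ⟨N, hN⟩ := exists_nat_ge (dist p q / (2*D))
  have hle : dist p q ≤ 2*D*(N+1) := by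
    have h2D : (0:ℝ) < 2*D := by linarith
    have := (div_le_iff₀ h2D).mp hN
    nlinarith
  obtain ⟨f, hf0, hfm, hf⟩ := chain_exists D hD N p q (by push_cast; exact hle)
  have h1 : 1 ≤ 2*(N+1) := by omega
  have htg := chain_transGen D f (2*(N+1)) h1 hf
  rw [hf0, hfm] at htg
  exact ⟨htg, 2*(N+1), h1, f, hf0, hfm, hf⟩
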